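/- Let R be a symmetric positive definite real N×N matrix, S a symmetric real N×N matrix with S² = R⁻¹, P a real m×N matrix, v ∈ ℝ^m, q ≥ 0 a real number, and ψ ∈ ℝ^N with ψᵀψ = 1. Assume S Pᵀ v = √q · ψ. Then u* = -R⁻¹Pᵀv is the unique global minimizer over u ∈ ℝ^N of the Hamiltonian H(u) = vᵀP u + (1/2)q + (1/2)uᵀR u, and min_u H(u) = 0; i.e., the HJB equation min_u {vᵀPu + (1/2)q + (1/2)uᵀRu} = 0 is satisfied. -/

import Mathlib

open Matrix

/-- For symmetric positive definite `R`, symmetric `S` with `S² = R⁻¹`,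
`q ≥ 0`, `ψᵀψ = 1`, and the gradient condition `S Pᵀ v = √q • ψ`, the control
`u* = -R⁻¹Pᵀv` is the unique global minimizer of the Hamiltonian
`H(u) = vᵀPu + (1/2)q + (1/2)uᵀRu`, and the minimum value is `0`:
the HJB equation `min_u H(u) = 0` is satisfied. -/
theorem hjb_closed_form_solution {N m : ℕ} (R S : Matrix (Fin N) (Fin N) ℝ)
    (hR : R.PosDef) (hSsymm : S.IsSymm) (hS2 : S * S = R⁻¹)
    (P : Matrix (Fin m) (Fin N) ℝ) (v : Fin m → ℝ) (q : ℝ) (hq : 0 ≤ q)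
    (ψ : Fin N → ℝ) (hψ : ψ ⬝ᵥ ψ = 1)
    (hgrad : S.mulVec (Pᵀ.mulVec v) = Real.sqrt q • ψ)
    (H : (Fin N → ℝ) → ℝ)
    (hH : ∀ u, H u = v ⬝ᵥ P.mulVec u + (1/2) * q + (1/2) * (u ⬝ᵥ R.mulVec u))
    (ustar : Fin N → ℝ) (hustar : ustar = -(R⁻¹.mulVec (Pᵀ.mulVec v))) :
    (∀ u, H ustar ≤ H u) ∧
    (∀ u, u ≠ ustar → H ustar < H u) ∧
    H ustar = 0 := by
  set w : Fin N → ℝ := Pᵀ.mulVec v with hw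
  have hRsymm : Rᵀ = R := hR.1
  have hdet : IsUnit R.det := isUnit_iff_ne_zero.mpr hR.det_pos.ne'
  have hRinv : R * R⁻¹ = 1 := Matrix.mul_nonsing_inv R hdet
  -- R ⬝ ustar = -w
  have hRu : R.mulVec ustar = -w := by
    rw [hustar, Matrix.mulVec_neg, Matrix.mulVec_mulVec, hRinv, Matrix.one_mulVec]
  -- w ⬝ᵥ R⁻¹ w = q
  have hSdot : ∀ x y : Fin N → ℝ, x ⬝ᵥ S.mulVec y = S.mulVec x ⬝ᵥ y := by
    intro x y
    rw [Matrix.dotProduct_mulVec, ← Matrix.mulVec_transpose, hSsymm]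
  have hq' : w ⬝ᵥ R⁻¹.mulVec w = q := by
    rw [← hS2, ← Matrix.mulVec_mulVec, hSdot, hgrad, dotProduct_smul,
      smul_dotProduct, hψ]
    simp [Real.mul_self_sqrt hq]
  -- v ⬝ᵥ P u = w ⬝ᵥ u
  have hvP : ∀ u, v ⬝ᵥ P.mulVec u = w ⬝ᵥ u := by
    intro u
    rw [Matrix.dotProduct_mulVec, hw, Matrix.mulVec_transpose]
  -- symmetry of R in dot products
  have hRdot : ∀ x y : Fin N → ℝ, x ⬝ᵥ R.mulVec y = R.mulVec x ⬝ᵥ y := by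
    intro x y
    rw [Matrix.dotProduct_mulVec, ← Matrix.mulVec_transpose, hRsymm]
  have hwu : w ⬝ᵥ ustar = -q := by
    rw [hustar, dotProduct_neg, hq']
  have hquad : ustar ⬝ᵥ R.mulVec ustar = q := by
    rw [hRdot, hRu]
    simp [hwu]
  -- key identity : H u = 1/2 * (u - ustar) ⬝ᵥ R (u - ustar)
  have key : ∀ u, H u = (1/2) * ((u - ustar) ⬝ᵥ R.mulVec (u - ustar)) := by
    intro u
    rw [hH, hvP]
    have expand : (u - ustar) ⬝ᵥ R.mulVec (u - ustar)
        = u ⬝ᵥ R.mulVec u - u ⬝ᵥ R.mulVec ustar - ustar ⬝ᵥ R.mulVec u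
          + ustar ⬝ᵥ R.mulVec ustar := by
      rw [Matrix.mulVec_sub, sub_dotProduct, dotProduct_sub,
        dotProduct_sub]
      ring
    have h1 : u ⬝ᵥ R.mulVec ustar = -(w ⬝ᵥ u) := by
      rw [hRu]; simp [dotProduct_comm]
    have h2 : ustar ⬝ᵥ R.mulVec u = -(w ⬝ᵥ u) := by
      rw [hRdot, hRu]; simp
    rw [expand, h1, h2, hquad]
    ring
  have hH0 : H ustar = 0 := by
    rw [key]; simp
  refine ⟨?_, ?_, hH0⟩
  · intro u
    rw [hH0, key]
    have := hR.posSemidef.dotProduct_mulVec_nonneg (u - ustar)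
    simp only [RCLike.re_to_real, star_trivial] at this
    nlinarith [this]
  · intro u hu
    rw [hH0, key]
    have hne : u - ustar ≠ 0 := sub_ne_zero.mpr hu
    have := hR.dotProduct_mulVec_pos hne
    simp only [RCLike.re_to_real, star_trivial] at this
    nlinarith [this]
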